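/- Let U ⊆ ℝ⁴ be open and A_x, A_y, A_z, φ : U → ℝ be C¹ with φ nonvanishing on U, and let B(x) be the wave-affine basis frame with rows [1,0,0,0], [0,1,0,0], [0,0,1,0], [A_x, A_y, A_z, −φ], with right Cartan connection C_x(v) = B(x)⁻¹ · (DB(x))(v). Let α be the Action 1-form α_x(v) = A_x(x) v₁ + A_y(x) v₂ + A_z(x) v₃ − φ(x) v₄, with field intensity 2-form F_x(u, v) = D(x ↦ α_x(v))(x)(u) − D(x ↦ α_x(u))(x)(v). Then the vector of affine torsion 2-forms T_x(u, v) = C_x(u)·v − C_x(v)·u has first three components identically zero and fourth component equal to −F_x(u, v)/φ(x); i.e., the excitation 2-forms of the wave-affine frame are (0, 0, 0, −F/φ). -/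

import Mathlib

attribute [local instance] Matrix.normedAddCommGroup Matrix.normedSpace

open scoped Matrix

/-- The right Cartan connection of a basis frame `B`: `C_x(v) = B(x)⁻¹ · (DB(x))(v)`. -/
noncomputable def rightCartan (B : (Fin 4 → ℝ) → Matrix (Fin 4) (Fin 4) ℝ)
    (x v : Fin 4 → ℝ) : Matrix (Fin 4) (Fin 4) ℝ :=
  (B x)⁻¹ * fderiv ℝ B x v

/-- The vector of affine torsion 2-forms `T = C ∧ dx` of the right Cartan connection:
`T_x(u,v) = C_x(u)·v − C_x(v)·u`. -/
noncomputable def affineTorsion (B : (Fin 4 → ℝ) → Matrix (Fin 4) (Fin 4) ℝ)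
    (x u v : Fin 4 → ℝ) : Fin 4 → ℝ :=
  rightCartan B x u *ᵥ v - rightCartan B x v *ᵥ u

set_option maxHeartbeats 1600000 in
/-- For the wave-affine basis frame `B` with rows `[1,0,0,0]`, `[0,1,0,0]`,
`[0,0,1,0]`, `[A_x, A_y, A_z, −φ]` (C¹ functions, `φ` nonvanishing on an open `U ⊆ ℝ⁴`),
with Action 1-form `α_x(v) = A_x v₁ + A_y v₂ + A_z v₃ − φ v₄` and field intensity
`F_x(u,v) = dα_x(u,v)`, the vector of affine torsion 2-forms `T_x(u,v)` has first three
components zero and fourth component `−F_x(u,v)/φ(x)`: the excitation 2-forms of the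
wave-affine frame are `(0, 0, 0, −F/φ)`. -/
theorem wave_affine_torsion (U : Set (Fin 4 → ℝ)) (hU : IsOpen U)
    (Ax Ay Az φ : (Fin 4 → ℝ) → ℝ)
    (hAx : ContDiffOn ℝ 1 Ax U) (hAy : ContDiffOn ℝ 1 Ay U)
    (hAz : ContDiffOn ℝ 1 Az U) (hφ : ContDiffOn ℝ 1 φ U)
    (hφne : ∀ x ∈ U, φ x ≠ 0)
    (B : (Fin 4 → ℝ) → Matrix (Fin 4) (Fin 4) ℝ)
    (hB : ∀ x, B x = !![1, 0, 0, 0; 0, 1, 0, 0; 0, 0, 1, 0; Ax x, Ay x, Az x, -φ x])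
    (α : (Fin 4 → ℝ) → (Fin 4 → ℝ) → ℝ)
    (hα : ∀ x v, α x v = Ax x * v 0 + Ay x * v 1 + Az x * v 2 - φ x * v 3)
    (F : (Fin 4 → ℝ) → (Fin 4 → ℝ) → (Fin 4 → ℝ) → ℝ)
    (hF : ∀ x u v, F x u v =
      fderiv ℝ (fun y => α y v) x u - fderiv ℝ (fun y => α y u) x v) :
    ∀ x ∈ U, ∀ u v : Fin 4 → ℝ,
      (∀ k : Fin 3, affineTorsion B x u v k.castSucc = 0) ∧
      affineTorsion B x u v 3 = -(F x u v) / φ x := by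
  intro x hx u v
  have hmem := hU.mem_nhds hx
  have dAx : DifferentiableAt ℝ Ax x := (hAx.contDiffAt hmem).differentiableAt one_ne_zero
  have dAy : DifferentiableAt ℝ Ay x := (hAy.contDiffAt hmem).differentiableAt one_ne_zero
  have dAz : DifferentiableAt ℝ Az x := (hAz.contDiffAt hmem).differentiableAt one_ne_zero
  have dφ : DifferentiableAt ℝ φ x := (hφ.contDiffAt hmem).differentiableAt one_ne_zero
  set ax := fderiv ℝ Ax x with hax_def
  set ay := fderiv ℝ Ay x with hay_def
  set az := fderiv ℝ Az x with haz_def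
  set aφ := fderiv ℝ φ x with haφ_def
  have hax : HasFDerivAt Ax ax x := dAx.hasFDerivAt
  have hay : HasFDerivAt Ay ay x := dAy.hasFDerivAt
  have haz : HasFDerivAt Az az x := dAz.hasFDerivAt
  have haφ : HasFDerivAt φ aφ x := dφ.hasFDerivAt
  have hφx : φ x ≠ 0 := hφne x hx
  -- the derivative of B
  set B' : (Fin 4 → ℝ) →L[ℝ] Matrix (Fin 4) (Fin 4) ℝ :=
    ContinuousLinearMap.pi (fun i : Fin 4 => ContinuousLinearMap.pi
      (fun j : Fin 4 => if i = 3 then ![ax, ay, az, -aφ] j else 0)) with hB'_def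
  have hBfun : B = fun y => !![1, 0, 0, 0; 0, 1, 0, 0; 0, 0, 1, 0; Ax y, Ay y, Az y, -φ y] :=
    funext hB
  have hDB : HasFDerivAt B B' x := by
    rw [hBfun]
    erw [hasFDerivAt_pi']
    intro i
    rw [hasFDerivAt_pi']
    intro j
    have hproj : ∀ i j : Fin 4,
        (ContinuousLinearMap.proj j).comp ((ContinuousLinearMap.proj i).comp B')
          = if i = 3 then ![ax, ay, az, -aφ] j else 0 := by
      intro i j
      ext w
      simp only [ContinuousLinearMap.comp_apply, ContinuousLinearMap.proj_apply,
        ContinuousLinearMap.pi_apply, hB'_def]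
    fin_cases i <;> fin_cases j <;> rw [hproj]
    all_goals
      first
        | exact hasFDerivAt_const _ _
        | exact hax | exact hay | exact haz | exact haφ.neg
  have hfB : fderiv ℝ B x = B' := hDB.fderiv
  -- entries of B' applied to a vector
  have hB'app : ∀ w : Fin 4 → ℝ, ∀ i j : Fin 4,
      B' w i j = if i = 3 then ![ax w, ay w, az w, -aφ w] j else 0 := by
    intro w i j
    rw [hB'_def]
    show ((ContinuousLinearMap.pi fun i => ContinuousLinearMap.pi
      fun j => if i = 3 then ![ax, ay, az, -aφ] j else 0) w) i j = _
    rw [ContinuousLinearMap.pi_apply, ContinuousLinearMap.pi_apply]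
    split_ifs with h <;> [skip; rfl]
    fin_cases j <;> simp
  -- explicit inverse of B x
  set M : Matrix (Fin 4) (Fin 4) ℝ :=
    !![1, 0, 0, 0; 0, 1, 0, 0; 0, 0, 1, 0;
       Ax x / φ x, Ay x / φ x, Az x / φ x, -(1 / φ x)] with hM_def
  have hinv : (B x)⁻¹ = M := by
    apply Matrix.inv_eq_right_inv
    rw [hB, hM_def]
    ext i j
    fin_cases i <;> fin_cases j <;>
      simp [Matrix.mul_apply, Fin.sum_univ_four] <;> field_simp <;> ring
  -- the Cartan connection rows
  have hCz : ∀ i : Fin 4, i ≠ 3 → ∀ w : Fin 4 → ℝ, ∀ j : Fin 4,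
      rightCartan B x w i j = 0 := by
    intro i hi w j
    rw [rightCartan, hfB, hinv, Matrix.mul_apply, Fin.sum_univ_four]
    fin_cases i <;> simp_all [hM_def, hB'app]
  have hC3 : ∀ w : Fin 4 → ℝ, ∀ j : Fin 4,
      rightCartan B x w 3 j = -(1 / φ x) * ![ax w, ay w, az w, -aφ w] j := by
    intro w j
    rw [rightCartan, hfB, hinv, Matrix.mul_apply, Fin.sum_univ_four]
    simp [hM_def, hB'app]
  -- derivative of the 1-form α in its first argument
  have hαder : ∀ w : Fin 4 → ℝ,
      fderiv ℝ (fun y => α y w) x =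
        w 0 • ax + w 1 • ay + w 2 • az - w 3 • aφ := by
    intro w
    have heq : (fun y => α y w) =
        fun y => Ax y * w 0 + Ay y * w 1 + Az y * w 2 - φ y * w 3 :=
      funext fun y => hα y w
    have h : HasFDerivAt (fun y => α y w)
        (w 0 • ax + w 1 • ay + w 2 • az - w 3 • aφ) x := by
      rw [heq]
      exact (((hax.mul_const (w 0)).add (hay.mul_const (w 1))).add
        (haz.mul_const (w 2))).sub (haφ.mul_const (w 3))
    exact h.fderiv
  have hFval : F x u v =
      (ax u * v 0 + ay u * v 1 + az u * v 2 - aφ u * v 3) -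
      (ax v * u 0 + ay v * u 1 + az v * u 2 - aφ v * u 3) := by
    rw [hF, hαder u, hαder v]
    simp only [ContinuousLinearMap.add_apply, ContinuousLinearMap.sub_apply,
      ContinuousLinearMap.coe_smul', Pi.smul_apply, smul_eq_mul]
    ring
  clear_value ax ay az aφ B' M
  constructor
  · intro k
    have key : ∀ i : Fin 4, i ≠ 3 → affineTorsion B x u v i = 0 := by
      intro i hi
      have e1 : rightCartan B x u i = 0 := funext (hCz i hi u)
      have e2 : rightCartan B x v i = 0 := funext (hCz i hi v)
      show rightCartan B x u i ⬝ᵥ v - rightCartan B x v i ⬝ᵥ u = 0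
      rw [e1, e2, zero_dotProduct, zero_dotProduct, sub_self]
    fin_cases k
    · exact key 0 (by decide)
    · exact key 1 (by decide)
    · exact key 2 (by decide)
  · have e1 : rightCartan B x u 3 =
        fun j => -(1 / φ x) * ![ax u, ay u, az u, -aφ u] j := funext (hC3 u)
    have e2 : rightCartan B x v 3 =
        fun j => -(1 / φ x) * ![ax v, ay v, az v, -aφ v] j := funext (hC3 v)
    show rightCartan B x u 3 ⬝ᵥ v - rightCartan B x v 3 ⬝ᵥ u = -(F x u v) / φ x
    have hdp : ∀ f g : Fin 4 → ℝ, f ⬝ᵥ g = f 0 * g 0 + f 1 * g 1 + f 2 * g 2 + f 3 * g 3 :=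
      fun f g => by simp [dotProduct, Fin.sum_univ_four]
    rw [e1, e2, hFval, hdp, hdp]
    simp only [Matrix.cons_val_zero, Matrix.cons_val_one, Matrix.head_cons,
      Matrix.cons_val_two, Matrix.tail_cons, Matrix.cons_val_three]
    field_simp
    ring
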